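/- For N-periodic infinite symmetric tridiagonal M with nonzero off-diagonals satisfying the stationarity equations for a degree n+1 superpotential W (n < N), with gcd-operator U of degree k from the factorization theorem: for every polynomial A of degree ≤ N−k−1, the matrix A(M)(U(M)_+ − U(M)_−) equals V(M)_+ − V(M)_− for some polynomial V, and commutes with M. In particular there are N−k linearly independent stationary Toda flows. -/

import Mathlib

namespace Toda

/-- Infinite ℤ×ℤ matrices over ℂ. -/
abbrev Mat : Type := ℤ → ℤ → ℂ

/-- Matrix multiplication (entrywise `tsum`; for band-type matrices these sums
are finitely supported). -/
noncomputable def mul (X Y : Mat) : Mat := fun i j => ∑' k : ℤ, X i k * Y k j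

/-- Commutator. -/
noncomputable def comm (X Y : Mat) : Mat := mul X Y - mul Y X

/-- Strictly upper triangular part. -/
def upper (X : Mat) : Mat := fun i j => if i < j then X i j else 0

/-- Strictly lower triangular part. -/
def lower (X : Mat) : Mat := fun i j => if j < i then X i j else 0

/-- Diagonal part. -/
def diagPart (X : Mat) : Mat := fun i j => if i = j then X i j else 0

/-- Identity matrix. -/
def one : Mat := fun i j => if i = j then 1 else 0

/-- Matrix powers. -/
noncomputable def pow (X : Mat) : ℕ → Mat
  | 0 => one
  | m + 1 => mul X (pow X m)

/-- Evaluate a polynomial on a matrix. -/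
noncomputable def evalPoly (A : Polynomial ℂ) (X : Mat) : Mat :=
  ∑ m ∈ Finset.range (A.natDegree + 1), A.coeff m • pow X m

/-- `N`-periodicity of entries. -/
def Periodic (N : ℕ) (X : Mat) : Prop := ∀ i j, X (i + N) (j + N) = X i j

/-- `X` has (pure) degree `k`: nonzero entries only on diagonal `j = i + k`. -/
def HasDegree (k : ℤ) (X : Mat) : Prop := ∀ i j, X i j ≠ 0 → j = i + k

/-- `X` has maximal degree `k`: entries vanish above diagonal `k`. -/
def MaxDeg (k : ℤ) (X : Mat) : Prop := ∀ i j, X i j ≠ 0 → j - i ≤ k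

/-- The infinite symmetric tridiagonal Toda Lax matrix with diagonal `φ` and
off-diagonal entries `y`. -/
def todaM (φ y : ℤ → ℂ) : Mat := fun i j =>
  if j = i then φ i
  else if j = i + 1 then y i
  else if i = j + 1 then y j
  else 0

/-- Degree-`r` component of a matrix. -/
def topPart (r : ℤ) (X : Mat) : Mat := fun i j => if j = i + r then X i j else 0

/-- Inverse of the degree-`r` component (a matrix of degree `-r`). -/
noncomputable def topInv (r : ℤ) (X : Mat) : Mat :=
  fun i j => if j = i - r then (X j (j + r))⁻¹ else 0

/-- Entrywise geometric series `Σ_{k≥0} (-1)^k Q^k`, which is a finite sum in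
each entry when `Q` has maximal degree `≤ -1`. -/
noncomputable def geomSeries (Q : Mat) : Mat :=
  fun i j => ∑ m ∈ Finset.range ((i - j).toNat + 1), (-1 : ℂ) ^ m * pow Q m i j

/-- The inverse `R⁻¹ = (R^{(r)})⁻¹ Σ_{k≥0} (-1)^k (R̃ (R^{(r)})⁻¹)^k` of a matrix
of maximal degree `r` with invertible top component. -/
noncomputable def geomInv (r : ℤ) (R : Mat) : Mat :=
  mul (topInv r R) (geomSeries (mul (R - topPart r R) (topInv r R)))

/-- Integer powers of a matrix, negative powers via the geometric-series inverse. -/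
noncomputable def intPow (X : Mat) (m : ℤ) : Mat :=
  if 0 ≤ m then pow X m.toNat else pow (geomInv 1 X) (-m).toNat

/-- Shift operator `Z = D^N`. -/
def shiftZ (N : ℕ) : Mat := fun i j => if j = i + N then 1 else 0

/-- Inverse shift `Z⁻¹`. -/
def shiftZinv (N : ℕ) : Mat := fun i j => if j = i - N then 1 else 0

/-- The finite `N×N` periodic Toda Lax matrix with spectral parameter `z`,
diagonal `p`, off-diagonal entries `y 1, …, y (N-1)` and corner entries
`y 0 * z`, `y 0 * z⁻¹`. -/
noncomputable def laxFin (N : ℕ) (p y : ℕ → ℂ) (z : ℂ) :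
    Matrix (Fin N) (Fin N) ℂ := fun i j =>
  if (i : ℕ) = j then p i
  else if (j : ℕ) = i + 1 then y (i + 1)
  else if (i : ℕ) = j + 1 then y (j + 1)
  else if (i : ℕ) = 0 ∧ (j : ℕ) = N - 1 then y 0 * z
  else if (i : ℕ) = N - 1 ∧ (j : ℕ) = 0 then y 0 * z⁻¹
  else 0

/-- Embedding of polynomials in `x` into the field `ℂ((x⁻¹))` of Laurent series
at infinity, sending `x` to the inverse of the local parameter. -/
noncomputable def atInf (p : Polynomial ℂ) : LaurentSeries ℂ :=
  Polynomial.eval₂ HahnSeries.C (HahnSeries.single (-1 : ℤ) 1) p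

/-! Band matrices -/

def Band (b : ℤ) (X : Mat) : Prop := ∀ i j : ℤ, X i j ≠ 0 → j ≤ i + b ∧ i ≤ j + b

lemma band_todaM (φ y : ℤ → ℂ) : Band 1 (todaM φ y) := by
  intro i j h
  unfold todaM at h
  split_ifs at h with h1 h2 h3
  · omega
  · omega
  · omega
  · exact absurd rfl h

lemma mul_eq_sum_left {b : ℤ} {X : Mat} (hX : Band b X) (Y : Mat) (i j : ℤ) :
    mul X Y i j = ∑ k ∈ Finset.Icc (i - b) (i + b), X i k * Y k j := by
  refine tsum_eq_sum (fun k hk => ?_)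
  rw [Finset.mem_Icc] at hk
  have : X i k = 0 := by
    by_contra h
    have := hX i k h
    omega
  rw [this, zero_mul]

lemma mul_eq_sum_right {b : ℤ} {Y : Mat} (hY : Band b Y) (X : Mat) (i j : ℤ) :
    mul X Y i j = ∑ k ∈ Finset.Icc (j - b) (j + b), X i k * Y k j := by
  refine tsum_eq_sum (fun k hk => ?_)
  rw [Finset.mem_Icc] at hk
  have : Y k j = 0 := by
    by_contra h
    have := hY k j h
    omega
  rw [this, mul_zero]

lemma band_mul {a b : ℤ} {X Y : Mat} (hX : Band a X) (hY : Band b Y) :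
    Band (a + b) (mul X Y) := by
  intro i j h
  have : ∃ k, X i k * Y k j ≠ 0 := by
    by_contra hc
    push_neg at hc
    have : mul X Y i j = 0 := by
      unfold mul; simp only [hc]; exact tsum_zero
    exact h this
  obtain ⟨k, hk⟩ := this
  have h1 := hX i k (fun h0 => hk (by rw [h0, zero_mul]))
  have h2 := hY k j (fun h0 => hk (by rw [h0, mul_zero]))
  omega

lemma mul_assoc_of {a b : ℤ} {X Y : Mat} (hX : Band a X) (hY : Band b Y) (Z : Mat) :
    mul (mul X Y) Z = mul X (mul Y Z) := by
  funext i j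
  rw [mul_eq_sum_left (band_mul hX hY) Z, mul_eq_sum_left hX (mul Y Z)]
  have hrw : ∀ l ∈ Finset.Icc (i - a) (i + a),
      X i l * mul Y Z l j
        = ∑ k ∈ Finset.Icc (i - (a + b)) (i + (a + b)), X i l * (Y l k * Z k j) := by
    intro l hl
    rw [Finset.mem_Icc] at hl
    have : mul Y Z l j = ∑ k ∈ Finset.Icc (i - (a + b)) (i + (a + b)), Y l k * Z k j := by
      refine tsum_eq_sum (fun k hk => ?_)
      rw [Finset.mem_Icc] at hk
      have : Y l k = 0 := by
        by_contra h
        have := hY l k h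
        omega
      rw [this, zero_mul]
    rw [this, Finset.mul_sum]
  rw [Finset.sum_congr rfl hrw, Finset.sum_comm]
  refine Finset.sum_congr rfl (fun k _ => ?_)
  rw [mul_eq_sum_left hX Y, Finset.sum_mul]
  exact Finset.sum_congr rfl (fun l _ => mul_assoc _ _ _)

lemma mul_one_right (X : Mat) : mul X one = X := by
  funext i j
  refine (tsum_eq_single j (fun k hk => ?_)).trans ?_
  · have : one k j = 0 := by unfold one; simp [hk]
    rw [this, mul_zero]
  · unfold one; simp

lemma mul_one_left (X : Mat) : mul one X = X := by
  funext i j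
  refine (tsum_eq_single i (fun k hk => ?_)).trans ?_
  · have : one i k = 0 := by unfold one; simp [Ne.symm hk]
    rw [this, zero_mul]
  · unfold one; simp

lemma mul_smul_right (c : ℂ) (X Y : Mat) : mul X (c • Y) = c • mul X Y := by
  funext i j
  show ∑' k, X i k * (c * Y k j) = c * ∑' k, X i k * Y k j
  rw [← tsum_mul_left]
  exact tsum_congr fun k => by ring

lemma mul_smul_left (c : ℂ) (X Y : Mat) : mul (c • X) Y = c • mul X Y := by
  funext i j
  show ∑' k, (c * X i k) * Y k j = c * ∑' k, X i k * Y k j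
  rw [← tsum_mul_left]
  exact tsum_congr fun k => by ring

lemma mul_sub_right {b : ℤ} {X : Mat} (hX : Band b X) (Y Z : Mat) :
    mul X (Y - Z) = mul X Y - mul X Z := by
  funext i j
  show mul X (Y - Z) i j = mul X Y i j - mul X Z i j
  rw [mul_eq_sum_left hX, mul_eq_sum_left hX, mul_eq_sum_left hX, ← Finset.sum_sub_distrib]
  exact Finset.sum_congr rfl fun k _ => by
    show X i k * (Y k j - Z k j) = _
    ring

lemma mul_sum_right {b : ℤ} {X : Mat} (hX : Band b X) {s : Finset ℕ} (f : ℕ → Mat) :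
    mul X (∑ m ∈ s, f m) = ∑ m ∈ s, mul X (f m) := by
  funext i j
  rw [Finset.sum_apply, Finset.sum_apply]
  rw [mul_eq_sum_left hX]
  have : ∀ m ∈ s, mul X (f m) i j = ∑ k ∈ Finset.Icc (i - b) (i + b), X i k * f m k j :=
    fun m _ => mul_eq_sum_left hX (f m) i j
  rw [Finset.sum_congr rfl this, Finset.sum_comm]
  refine Finset.sum_congr rfl fun k _ => ?_
  show X i k * (∑ m ∈ s, f m) k j = _
  simp only [Finset.sum_apply]
  rw [Finset.mul_sum]

lemma mul_sum_left {b : ℤ} {Y : Mat} (hY : Band b Y) {s : Finset ℕ} (f : ℕ → Mat) :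
    mul (∑ m ∈ s, f m) Y = ∑ m ∈ s, mul (f m) Y := by
  funext i j
  rw [Finset.sum_apply, Finset.sum_apply]
  rw [mul_eq_sum_right hY]
  have : ∀ m ∈ s, mul (f m) Y i j = ∑ k ∈ Finset.Icc (j - b) (j + b), f m i k * Y k j :=
    fun m _ => mul_eq_sum_right hY (f m) i j
  rw [Finset.sum_congr rfl this, Finset.sum_comm]
  refine Finset.sum_congr rfl fun k _ => ?_
  show (∑ m ∈ s, f m) i k * Y k j = _
  simp only [Finset.sum_apply]
  rw [Finset.sum_mul]


/-! Powers and polynomial evaluation -/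

lemma band_one : Band 0 one := by
  intro i j h
  unfold one at h
  split_ifs at h with h1
  · omega
  · exact absurd rfl h

lemma band_pow {b : ℤ} {X : Mat} (hX : Band b X) (m : ℕ) : Band (m * b) (pow X m) := by
  induction m with
  | zero => simp only [Nat.cast_zero, zero_mul]; exact band_one
  | succ m ih =>
      have := band_mul hX ih
      intro i j h
      have := this i j h
      push_cast
      constructor <;> nlinarith [this.1, this.2]

lemma pow_comm {b : ℤ} {X : Mat} (hX : Band b X) (m : ℕ) :
    mul X (pow X m) = mul (pow X m) X := by
  induction m with
  | zero => show mul X one = mul one X; rw [mul_one_right, mul_one_left]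
  | succ m ih =>
      show mul X (mul X (pow X m)) = mul (mul X (pow X m)) X
      rw [mul_assoc_of hX (band_pow hX m), ih]

lemma evalPoly_eq_range (A : Polynomial ℂ) (X : Mat) {n : ℕ} (h : A.natDegree < n) :
    evalPoly A X = ∑ m ∈ Finset.range n, A.coeff m • pow X m := by
  unfold evalPoly
  refine Finset.sum_subset (Finset.range_subset_range.mpr (by omega)) (fun m hm hmn => ?_)
  have : A.coeff m = 0 := Polynomial.coeff_eq_zero_of_natDegree_lt (by
    simp only [Finset.mem_range] at hm hmn; omega)
  rw [this, zero_smul]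

lemma evalPoly_zero (X : Mat) : evalPoly 0 X = 0 := by
  unfold evalPoly
  simp

lemma evalPoly_sub (P Q : Polynomial ℂ) (X : Mat) :
    evalPoly (P - Q) X = evalPoly P X - evalPoly Q X := by
  set n := max (max P.natDegree Q.natDegree) ((P - Q).natDegree) + 1 with hn
  rw [evalPoly_eq_range P X (n := n) (by omega), evalPoly_eq_range Q X (n := n) (by omega),
    evalPoly_eq_range (P - Q) X (n := n) (by omega), ← Finset.sum_sub_distrib]
  exact Finset.sum_congr rfl fun m _ => by rw [Polynomial.coeff_sub, sub_smul]

lemma evalPoly_add (P Q : Polynomial ℂ) (X : Mat) :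
    evalPoly (P + Q) X = evalPoly P X + evalPoly Q X := by
  set n := max (max P.natDegree Q.natDegree) ((P + Q).natDegree) + 1 with hn
  rw [evalPoly_eq_range P X (n := n) (by omega), evalPoly_eq_range Q X (n := n) (by omega),
    evalPoly_eq_range (P + Q) X (n := n) (by omega), ← Finset.sum_add_distrib]
  exact Finset.sum_congr rfl fun m _ => by rw [Polynomial.coeff_add, add_smul]

lemma evalPoly_smul (c : ℂ) (P : Polynomial ℂ) (X : Mat) :
    evalPoly (c • P) X = c • evalPoly P X := by
  set n := max P.natDegree ((c • P).natDegree) + 1 with hn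
  rw [evalPoly_eq_range P X (n := n) (by omega), evalPoly_eq_range (c • P) X (n := n) (by omega),
    Finset.smul_sum]
  exact Finset.sum_congr rfl fun m _ => by
    rw [Polynomial.coeff_smul, smul_eq_mul, smul_smul]

lemma evalPoly_X (X : Mat) : evalPoly Polynomial.X X = X := by
  unfold evalPoly
  rw [Polynomial.natDegree_X]
  rw [Finset.sum_range_succ, Finset.sum_range_succ, Finset.sum_range_zero]
  simp only [Polynomial.coeff_X_zero, Polynomial.coeff_X_one, zero_smul, one_smul, zero_add]
  show mul X one = X
  exact mul_one_right X

lemma evalPoly_X_mul {b : ℤ} {X : Mat} (hX : Band b X) (P : Polynomial ℂ) :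
    evalPoly (Polynomial.X * P) X = mul X (evalPoly P X) := by
  have hdeg : (Polynomial.X * P).natDegree < P.natDegree + 2 := by
    have := Polynomial.natDegree_mul_le (p := (Polynomial.X : Polynomial ℂ)) (q := P)
    rw [Polynomial.natDegree_X] at this
    omega
  rw [evalPoly_eq_range _ X hdeg]
  show ∑ m ∈ Finset.range (P.natDegree + 1 + 1), (Polynomial.X * P).coeff m • pow X m = _
  have hs := Finset.sum_range_succ'
    ((fun m => (Polynomial.X * P).coeff m • pow X m) : ℕ → Mat) (P.natDegree + 1)
  rw [hs]
  rw [Polynomial.mul_coeff_zero, Polynomial.coeff_X_zero, zero_mul, zero_smul, add_zero]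
  unfold evalPoly
  rw [mul_sum_right hX]
  exact Finset.sum_congr rfl fun m _ => by
    rw [Polynomial.coeff_X_mul, mul_smul_right]
    rfl

lemma evalPoly_comm {b : ℤ} {X : Mat} (hX : Band b X) (A : Polynomial ℂ) :
    mul X (evalPoly A X) = mul (evalPoly A X) X := by
  unfold evalPoly
  rw [mul_sum_right hX, mul_sum_left hX]
  exact Finset.sum_congr rfl fun m _ => by
    rw [mul_smul_right, mul_smul_left, pow_comm hX]

lemma band_evalPoly {b : ℤ} {X : Mat} (hX : Band b X) (hb : 0 ≤ b) (A : Polynomial ℂ) :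
    Band (A.natDegree * b) (evalPoly A X) := by
  intro i j h
  unfold evalPoly at h
  rw [Finset.sum_apply, Finset.sum_apply] at h
  obtain ⟨m, hm, hne⟩ := Finset.exists_ne_zero_of_sum_ne_zero h
  have hpow : pow X m i j ≠ 0 := by
    intro h0
    apply hne
    show A.coeff m • pow X m i j = 0
    rw [h0, smul_zero]
  have := band_pow hX m i j hpow
  rw [Finset.mem_range] at hm
  have hmb : (m : ℤ) * b ≤ (A.natDegree : ℤ) * b := by
    have : (m : ℤ) ≤ A.natDegree := by omega
    exact mul_le_mul_of_nonneg_right this hb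
  omega

/-! Symmetry -/

def Symm (X : Mat) : Prop := ∀ i j, X i j = X j i

lemma symm_mul_entry {X Y : Mat} (hX : Symm X) (hY : Symm Y) (i j : ℤ) :
    mul X Y i j = mul Y X j i :=
  tsum_congr fun k => by rw [hX i k, hY k j, mul_comm]

lemma symm_todaM (φ y : ℤ → ℂ) : Symm (todaM φ y) := by
  intro i j
  unfold todaM
  split_ifs with h1 h2 h3 h4 h5 h6 h7 <;>
    first | rfl | omega | exact congrArg φ (by omega) | exact congrArg y (by omega)

lemma symm_pow {b : ℤ} {X : Mat} (hX : Band b X) (hs : Symm X) (m : ℕ) :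
    Symm (pow X m) := by
  induction m with
  | zero => intro i j; unfold pow one; split_ifs with h1 h2 <;> first | rfl | omega
  | succ m ih =>
      intro i j
      show mul X (pow X m) i j = mul X (pow X m) j i
      rw [symm_mul_entry hs ih, pow_comm hX]

lemma symm_evalPoly {b : ℤ} {X : Mat} (hX : Band b X) (hs : Symm X) (A : Polynomial ℂ) :
    Symm (evalPoly A X) := by
  intro i j
  unfold evalPoly
  rw [Finset.sum_apply, Finset.sum_apply, Finset.sum_apply, Finset.sum_apply]
  exact Finset.sum_congr rfl fun m _ => by
    show A.coeff m • pow X m i j = A.coeff m • pow X m j i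
    rw [symm_pow hX hs m i j]


/-! Entry formulas for multiplication by the tridiagonal matrix -/

lemma mulM_left (φ y : ℤ → ℂ) (X : Mat) (i j : ℤ) :
    mul (todaM φ y) X i j
      = y (i-1) * X (i-1) j + φ i * X i j + y i * X (i+1) j := by
  rw [mul_eq_sum_left (band_todaM φ y) X]
  rw [show Finset.Icc (i-1) (i+1) = {i-1, i, i+1} from by
    ext k; simp only [Finset.mem_Icc, Finset.mem_insert, Finset.mem_singleton]; omega]
  rw [Finset.sum_insert (by
        simp only [Finset.mem_insert, Finset.mem_singleton]; omega),
      Finset.sum_insert (by simp only [Finset.mem_singleton]; omega),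
      Finset.sum_singleton]
  have e1 : todaM φ y i (i-1) = y (i-1) := by
    unfold todaM; split_ifs with h1 h2 h3 <;> first | rfl | omega
  have e2 : todaM φ y i i = φ i := by unfold todaM; simp
  have e3 : todaM φ y i (i+1) = y i := by
    unfold todaM; split_ifs with h1 h2 <;> first | rfl | omega
  rw [e1, e2, e3]
  ring

lemma mulM_right (φ y : ℤ → ℂ) (X : Mat) (i j : ℤ) :
    mul X (todaM φ y) i j
      = X i (j-1) * y (j-1) + X i j * φ j + X i (j+1) * y j := by
  rw [mul_eq_sum_right (band_todaM φ y) X]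
  rw [show Finset.Icc (j-1) (j+1) = {j-1, j, j+1} from by
    ext k; simp only [Finset.mem_Icc, Finset.mem_insert, Finset.mem_singleton]; omega]
  rw [Finset.sum_insert (by
        simp only [Finset.mem_insert, Finset.mem_singleton]; omega),
      Finset.sum_insert (by simp only [Finset.mem_singleton]; omega),
      Finset.sum_singleton]
  have e1 : todaM φ y (j-1) j = y (j-1) := by
    unfold todaM; split_ifs with h1 h2 <;> first | rfl | omega
  have e2 : todaM φ y j j = φ j := by unfold todaM; simp
  have e3 : todaM φ y (j+1) j = y j := by
    unfold todaM; split_ifs with h1 h2 h3 <;> first | rfl | omega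
  rw [e1, e2, e3]
  ring

/-! The key structural lemma -/

section Key

variable (φ y : ℤ → ℂ)

lemma key_diag_step (hy0 : ∀ i, y i ≠ 0) (R : Mat)
    (hRc : mul (todaM φ y) R = mul R (todaM φ y))
    (hTc : mul (todaM φ y) (upper R - lower R)
      = mul (upper R - lower R) (todaM φ y)) (i : ℤ) :
    R (i+1) (i+1) = R i i := by
  have E1 := congrFun (congrFun hRc i) (i+1)
  have E2 := congrFun (congrFun hTc i) (i+1)
  rw [mulM_left, mulM_right] at E1 E2
  simp only [add_sub_cancel_right] at E1 E2
  simp only [upper, lower, Pi.sub_apply] at E2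
  refine mul_left_cancel₀ (hy0 i) ?_
  split_ifs at E2 <;> first | omega | linear_combination E1 - E2

lemma key_offdiag (hy0 : ∀ i, y i ≠ 0) (R : Mat) (hsym : Symm R)
    (hRc : mul (todaM φ y) R = mul R (todaM φ y))
    (hTc : mul (todaM φ y) (upper R - lower R)
      = mul (upper R - lower R) (todaM φ y)) (i : ℤ) :
    y i * R (i+1) i = y (i-1) * R i (i-1) := by
  have E1 := congrFun (congrFun hRc i) i
  have E2 := congrFun (congrFun hTc i) i
  rw [mulM_left, mulM_right] at E1 E2
  simp only [upper, lower, Pi.sub_apply] at E2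
  split_ifs at E2 <;>
    first
      | omega
      | linear_combination (E1 - E2) / 2
      | linear_combination (E2 - E1) / 2

lemma key_diag_all (hy0 : ∀ i, y i ≠ 0) (R : Mat)
    (hRc : mul (todaM φ y) R = mul R (todaM φ y))
    (hTc : mul (todaM φ y) (upper R - lower R)
      = mul (upper R - lower R) (todaM φ y)) (i : ℤ) :
    R i i = R 0 0 := by
  induction i using Int.induction_on with
  | zero => rfl
  | succ n ih => rw [key_diag_step φ y hy0 R hRc hTc n, ih]
  | pred n ih =>
      have := key_diag_step φ y hy0 R hRc hTc (-n - 1)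
      rw [show (-n - 1 + 1 : ℤ) = -n from by ring] at this
      rw [← this, ih]

lemma key (hy0 : ∀ i, y i ≠ 0) (R : Mat) (hsym : Symm R)
    (hRc : mul (todaM φ y) R = mul R (todaM φ y))
    (hTc : mul (todaM φ y) (upper R - lower R)
      = mul (upper R - lower R) (todaM φ y)) :
    mul (todaM φ y) (upper R - lower R)
      = upper (mul (todaM φ y) R) - lower (mul (todaM φ y) R)
        - R 0 0 • (upper (todaM φ y) - lower (todaM φ y)) := by
  have hd := key_diag_all φ y hy0 R hRc hTc
  have hb := key_offdiag φ y hy0 R hsym hRc hTc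
  funext i j
  show mul (todaM φ y) (upper R - lower R) i j
    = upper (mul (todaM φ y) R) i j - lower (mul (todaM φ y) R) i j
      - R 0 0 * (upper (todaM φ y) i j - lower (todaM φ y) i j)
  rw [mulM_left]
  simp only [upper, lower, Pi.sub_apply, todaM]
  rw [mulM_left]
  by_cases h1 : i + 1 < j
  · split_ifs <;> first | omega | ring1
  by_cases h2 : j = i + 1
  · subst h2
    split_ifs <;>
      first
        | omega
        | ring1
        | linear_combination (y i) * hd (i+1)
        | linear_combination (-(y i)) * hd (i+1)
  by_cases h3 : j = i
  · subst h3
    split_ifs <;>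
      first
        | omega
        | ring1
        | linear_combination y (j-1) * hsym (j-1) j - hb j
        | linear_combination hb j - y (j-1) * hsym (j-1) j
        | linear_combination y (i-1) * hsym (i-1) i - hb i
        | linear_combination hb i - y (i-1) * hsym (i-1) i
  by_cases h4 : j = i - 1
  · subst h4
    split_ifs <;>
      first
        | omega
        | ring1
        | linear_combination (y (i-1)) * hd (i-1)
        | linear_combination (-(y (i-1))) * hd (i-1)
  · split_ifs <;> first | omega | ring1

end Key


/-! Auxiliary band / upper-lower lemmas -/

lemma band_upper {b : ℤ} {X : Mat} (h : Band b X) : Band b (upper X) := by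
  intro i j hne
  refine h i j ?_
  unfold upper at hne
  split_ifs at hne with h1
  · exact hne
  · exact absurd rfl hne

lemma band_lower {b : ℤ} {X : Mat} (h : Band b X) : Band b (lower X) := by
  intro i j hne
  refine h i j ?_
  unfold lower at hne
  split_ifs at hne with h1
  · exact hne
  · exact absurd rfl hne

lemma band_sub {b : ℤ} {X Y : Mat} (hX : Band b X) (hY : Band b Y) :
    Band b (X - Y) := by
  intro i j hne
  by_cases h : X i j = 0
  · refine hY i j ?_
    intro h0
    apply hne
    show X i j - Y i j = 0
    rw [h, h0, sub_zero]
  · exact hX i j h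

lemma ul_combine (A B : Mat) (c : ℂ) :
    upper (A - c • B) - lower (A - c • B)
      = upper A - lower A - c • (upper B - lower B) := by
  funext i j
  simp only [upper, lower, Pi.sub_apply, Pi.smul_apply, smul_eq_mul]
  split_ifs <;> ring

lemma ul_linear (c : ℂ) (P Q : Mat) :
    upper (c • P + Q) - lower (c • P + Q)
      = c • (upper P - lower P) + (upper Q - lower Q) := by
  funext i j
  simp only [upper, lower, Pi.add_apply, Pi.smul_apply, Pi.sub_apply, smul_eq_mul]
  split_ifs <;> ring

lemma ul_zero : upper (0 : Mat) - lower (0 : Mat) = 0 := by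
  funext i j
  simp only [upper, lower, Pi.sub_apply, Pi.zero_apply]
  split_ifs <;> ring

/-! The main induction -/

section Main

variable (φ y : ℤ → ℂ)

lemma main_step (hy0 : ∀ i, y i ≠ 0) (U : Polynomial ℂ)
    (hUc : mul (todaM φ y)
        (upper (evalPoly U (todaM φ y)) - lower (evalPoly U (todaM φ y)))
      = mul (upper (evalPoly U (todaM φ y)) - lower (evalPoly U (todaM φ y)))
          (todaM φ y)) (m : ℕ) :
    ∃ V : Polynomial ℂ,
      mul (pow (todaM φ y) m)
          (upper (evalPoly U (todaM φ y)) - lower (evalPoly U (todaM φ y)))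
        = upper (evalPoly V (todaM φ y)) - lower (evalPoly V (todaM φ y)) := by
  set M := todaM φ y with hM
  set Y := upper (evalPoly U M) - lower (evalPoly U M) with hY
  have hbM : Band 1 M := band_todaM φ y
  have hbY : Band ((U.natDegree : ℤ) * 1) Y := by
    have := band_evalPoly hbM (by norm_num) U
    exact band_sub (band_upper this) (band_lower this)
  induction m with
  | zero =>
      refine ⟨U, ?_⟩
      show mul one Y = Y
      exact mul_one_left Y
  | succ m ih =>
      obtain ⟨V, hV⟩ := ih
      set R := evalPoly V M with hR
      have hRc : mul M R = mul R M := evalPoly_comm hbM V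
      have hsymR : Symm R := symm_evalPoly hbM (symm_todaM φ y) V
      have hbP : Band ((m : ℤ) * 1) (pow M m) := band_pow hbM m
      have hTc : mul M (upper R - lower R) = mul (upper R - lower R) M := by
        rw [← hV]
        calc mul M (mul (pow M m) Y)
            = mul (mul M (pow M m)) Y := (mul_assoc_of hbM hbP Y).symm
          _ = mul (mul (pow M m) M) Y := by rw [pow_comm hbM m]
          _ = mul (pow M m) (mul M Y) := mul_assoc_of hbP hbM Y
          _ = mul (pow M m) (mul Y M) := by rw [hUc]
          _ = mul (mul (pow M m) Y) M := (mul_assoc_of hbP hbY M).symm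
      refine ⟨Polynomial.X * V - (R 0 0) • Polynomial.X, ?_⟩
      have step1 : mul (pow M (m+1)) Y = mul M (mul (pow M m) Y) := by
        show mul (mul M (pow M m)) Y = _
        exact mul_assoc_of hbM hbP Y
      rw [step1, hV]
      rw [key φ y hy0 R hsymR hRc hTc]
      rw [evalPoly_sub, evalPoly_smul, evalPoly_X, evalPoly_X_mul hbM V]
      rw [ul_combine]

lemma main_sum (hy0 : ∀ i, y i ≠ 0) (U : Polynomial ℂ)
    (hUc : mul (todaM φ y)
        (upper (evalPoly U (todaM φ y)) - lower (evalPoly U (todaM φ y)))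
      = mul (upper (evalPoly U (todaM φ y)) - lower (evalPoly U (todaM φ y)))
          (todaM φ y)) (c : ℕ → ℂ) (s : Finset ℕ) :
    ∃ V : Polynomial ℂ,
      (∑ m ∈ s, c m • mul (pow (todaM φ y) m)
          (upper (evalPoly U (todaM φ y)) - lower (evalPoly U (todaM φ y))))
        = upper (evalPoly V (todaM φ y)) - lower (evalPoly V (todaM φ y)) := by
  classical
  induction s using Finset.induction_on with
  | empty =>
      refine ⟨0, ?_⟩
      rw [Finset.sum_empty, evalPoly_zero, ul_zero]
  | insert a s' hnotmem ih =>
      obtain ⟨W, hW⟩ := ih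
      obtain ⟨Va, hVa⟩ := main_step φ y hy0 U hUc a
      refine ⟨c a • Va + W, ?_⟩
      rw [Finset.sum_insert hnotmem, hW, hVa, evalPoly_add, evalPoly_smul, ul_linear]

end Main

/-- given the gcd-operator `U` of degree `k` from the
factorization theorem, for every polynomial `A` of degree `≤ N − k − 1` the
matrix `A(M)(U(M)₊ − U(M)₋)` is of the form `V(M)₊ − V(M)₋` and commutes with
`M`; thus `N − k` independent Toda flows are stationary. -/
theorem stationary_flows
    (N n k : ℕ) (hN : 2 < N) (hn : 0 < n) (hnN : n < N)
    (hk1 : 1 ≤ k) (hkn : k ≤ n) (φ y : ℤ → ℂ)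
    (hφ : ∀ i, φ (i + N) = φ i) (hy : ∀ i, y (i + N) = y i)
    (hy0 : ∀ i, y i ≠ 0) (Λ : ℂ) (hΛ0 : Λ ≠ 0)
    (hΛ : ∏ i ∈ Finset.range N, y (i : ℤ) ^ 2 = Λ ^ (2 * N))
    (P : Polynomial ℂ) (hPmonic : P.Monic) (hPdeg : P.natDegree = N)
    (hdet : ∀ z : ℂ, z ≠ 0 → ∀ x : ℂ,
      Matrix.det (x • (1 : Matrix (Fin N) (Fin N) ℂ)
          - laxFin N (fun m => φ ((m : ℤ) + 1)) (fun m => y (m : ℤ)) z)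
        = P.eval x + (-1) ^ N * (z + Λ ^ (2 * N) * z⁻¹))
    (W : Polynomial ℂ) (hW : W.natDegree = n + 1)
    (hstat : comm (todaM φ y)
      (upper (evalPoly (Polynomial.derivative W) (todaM φ y))
        - lower (evalPoly (Polynomial.derivative W) (todaM φ y))) = 0)
    (hdiag : diagPart (evalPoly (Polynomial.derivative W) (todaM φ y)) = 0)
    (U H G : Polynomial ℂ) (hU : U.natDegree = k)
    (hHdeg : H.natDegree = N - k) (hGdeg : G.natDegree = n - k)
    (hUcomm : comm (todaM φ y)
      (upper (evalPoly U (todaM φ y)) - lower (evalPoly U (todaM φ y))) = 0)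
    (hPfac : upper (evalPoly P (todaM φ y)) - lower (evalPoly P (todaM φ y))
      = mul (evalPoly H (todaM φ y))
          (upper (evalPoly U (todaM φ y)) - lower (evalPoly U (todaM φ y))))
    (hWfac : upper (evalPoly (Polynomial.derivative W) (todaM φ y))
        - lower (evalPoly (Polynomial.derivative W) (todaM φ y))
      = mul (evalPoly G (todaM φ y))
          (upper (evalPoly U (todaM φ y)) - lower (evalPoly U (todaM φ y)))) :
    ∀ A : Polynomial ℂ, A.natDegree ≤ N - k - 1 →
      ∃ V : Polynomial ℂ,
        mul (evalPoly A (todaM φ y))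
            (upper (evalPoly U (todaM φ y)) - lower (evalPoly U (todaM φ y)))
          = upper (evalPoly V (todaM φ y)) - lower (evalPoly V (todaM φ y)) ∧
        comm (todaM φ y)
          (mul (evalPoly A (todaM φ y))
            (upper (evalPoly U (todaM φ y))
              - lower (evalPoly U (todaM φ y)))) = 0 := by
  intro A hA
  set M := todaM φ y with hM
  set Y := upper (evalPoly U M) - lower (evalPoly U M) with hYdef
  have hUc : mul M Y = mul Y M := by
    have h := hUcomm
    unfold comm at h
    exact sub_eq_zero.mp h
  have hbM : Band 1 M := band_todaM φ y
  have hbY : Band ((U.natDegree : ℤ) * 1) Y := by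
    have := band_evalPoly hbM (by norm_num) U
    exact band_sub (band_upper this) (band_lower this)
  have hbEA : Band ((A.natDegree : ℤ) * 1) (evalPoly A M) :=
    band_evalPoly hbM (by norm_num) A
  have hsplit : mul (evalPoly A M) Y
      = ∑ m ∈ Finset.range (A.natDegree + 1), A.coeff m • mul (pow M m) Y := by
    show mul (∑ m ∈ Finset.range (A.natDegree + 1), A.coeff m • pow M m) Y = _
    rw [mul_sum_left hbY]
    exact Finset.sum_congr rfl fun m _ => mul_smul_left _ _ _
  obtain ⟨V, hV⟩ := main_sum φ y hy0 U hUc (fun m => A.coeff m)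
    (Finset.range (A.natDegree + 1))
  refine ⟨V, ?_, ?_⟩
  · rw [hsplit]
    exact hV
  · show comm M (mul (evalPoly A M) Y) = 0
    have hcomm : mul M (mul (evalPoly A M) Y) = mul (mul (evalPoly A M) Y) M := by
      calc mul M (mul (evalPoly A M) Y)
          = mul (mul M (evalPoly A M)) Y := (mul_assoc_of hbM hbEA Y).symm
        _ = mul (mul (evalPoly A M) M) Y := by rw [evalPoly_comm hbM A]
        _ = mul (evalPoly A M) (mul M Y) := mul_assoc_of hbEA hbM Y
        _ = mul (evalPoly A M) (mul Y M) := by rw [hUc]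
        _ = mul (mul (evalPoly A M) Y) M := (mul_assoc_of hbEA hbY M).symm
    unfold comm
    rw [hcomm, sub_self]

end Toda
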